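/- Let g, g_n : ℝ → (n×n real matrices) be curves differentiable at t₀ with g(t₀) and g_n(t₀) invertible, and suppose g'(t₀) = g(t₀)·V and g_n'(t₀) = g_n(t₀)·W for n×n real matrices V, W. Then the left-invariant error g_e(t) := g_n(t)⁻¹·g(t) is differentiable at t₀ with derivative g_e(t₀)·(V − g_e(t₀)⁻¹·W·g_e(t₀)). Equivalently, ġ_e = g_e·(V − Ad_{g_e}⁻¹ W). -/

import Mathlib

/-!
STATEMENT 12: Let g, g_n : ℝ → (n×n real matrices) be curves differentiable at t₀ with g(t₀)
and g_n(t₀) invertible, and suppose g'(t₀) = g(t₀)·V and g_n'(t₀) = g_n(t₀)·W.  Then the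
left-invariant error g_e(t) := g_n(t)⁻¹·g(t) is differentiable at t₀ with derivative
g_e(t₀)·(V − g_e(t₀)⁻¹·W·g_e(t₀)).
-/

open Matrix

attribute [local instance] Matrix.frobeniusNormedAddCommGroup Matrix.frobeniusNormedSpace

attribute [local instance] Matrix.frobeniusNormedRing Matrix.frobeniusNormedAlgebra

theorem left_invariant_error_dynamics
    {n : Type*} [Fintype n] [DecidableEq n]
    (g gn : ℝ → Matrix n n ℝ) (t₀ : ℝ) (V W : Matrix n n ℝ)
    (hg : IsUnit (g t₀)) (hgn : IsUnit (gn t₀))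
    (hg' : HasDerivAt g (g t₀ * V) t₀) (hgn' : HasDerivAt gn (gn t₀ * W) t₀) :
    let ge := (gn t₀)⁻¹ * g t₀
    HasDerivAt (fun t => (gn t)⁻¹ * g t) (ge * (V - ge⁻¹ * W * ge)) t₀ := by
  intro ge
  have hgd : IsUnit (g t₀).det := (Matrix.isUnit_iff_isUnit_det _).mp hg
  have hgnd : IsUnit (gn t₀).det := (Matrix.isUnit_iff_isUnit_det _).mp hgn
  have hA1 : g t₀ * (g t₀)⁻¹ = 1 := Matrix.mul_nonsing_inv _ hgd
  have hA2 : (g t₀)⁻¹ * g t₀ = 1 := Matrix.nonsing_inv_mul _ hgd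
  have hB1 : gn t₀ * (gn t₀)⁻¹ = 1 := Matrix.mul_nonsing_inv _ hgnd
  have hB2 : (gn t₀)⁻¹ * gn t₀ = 1 := Matrix.nonsing_inv_mul _ hgnd
  have hru : Ring.inverse (gn t₀) = ((hgn.unit⁻¹ : (Matrix n n ℝ)ˣ) : Matrix n n ℝ) := by
    have h := Ring.inverse_unit hgn.unit
    rw [hgn.unit_spec] at h
    exact h
  have hu : ((hgn.unit⁻¹ : (Matrix n n ℝ)ˣ) : Matrix n n ℝ) = (gn t₀)⁻¹ := by
    rw [Matrix.nonsing_inv_eq_ringInverse, hru]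
  have hinv : HasDerivAt (fun t => (gn t)⁻¹)
      (-((gn t₀)⁻¹ * (gn t₀ * W) * (gn t₀)⁻¹)) t₀ := by
    have h1 := (hasFDerivAt_ringInverse (𝕜 := ℝ) hgn.unit).comp_hasDerivAt t₀ hgn'
    simp only [ContinuousLinearMap.neg_apply, ContinuousLinearMap.mulLeftRight_apply,
      hu, IsUnit.unit_spec] at h1
    have heq : (fun t => (gn t)⁻¹) = fun t => Ring.inverse (gn t) := by
      funext t; exact Matrix.nonsing_inv_eq_ringInverse _
    rw [heq]
    exact h1
  have hmul := hinv.mul hg'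
  have hge : ge⁻¹ = (g t₀)⁻¹ * gn t₀ := by
    rw [show ge = (gn t₀)⁻¹ * g t₀ from rfl, Matrix.mul_inv_rev,
      Matrix.nonsing_inv_nonsing_inv _ hgnd]
  have cA : ∀ X : Matrix n n ℝ, g t₀ * ((g t₀)⁻¹ * X) = X := fun X => by
    rw [← Matrix.mul_assoc, hA1, Matrix.one_mul]
  have cB : ∀ X : Matrix n n ℝ, (gn t₀)⁻¹ * (gn t₀ * X) = X := fun X => by
    rw [← Matrix.mul_assoc, hB2, Matrix.one_mul]
  convert hmul using 1
  case e'_4 => rfl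
  case e'_5 => rfl
  case e'_6 => rfl
  case e'_8 => rfl
  rw [hge]
  show (gn t₀)⁻¹ * g t₀ * (V - (g t₀)⁻¹ * gn t₀ * W * ((gn t₀)⁻¹ * g t₀)) = _
  simp only [Matrix.mul_sub, Matrix.mul_assoc, cA, cB]
  noncomm_ring
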